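/- arXiv:1405.7627 — 11 statements merged into one kernel-verified Lean document; each statement's English description precedes it below -/
import Mathlib

section
/- Let x : I → ℝ³ \ {0} be C² satisfying the central-force system ẍ = ∂/∂x [ (h(|x|)/2)(L²/|x|² + μ) ] with x × ẋ = L⃗ constant, |L⃗| = |L|. Then the quantity ε := ṙ²/2 + (1 − h(r))L²/(2r²) − h(r)μ/2, where r = |x|, is constant along the trajectory. -/
private lemma lagrange3 (a b c d e f : ℝ) :
    (b*f - c*e)^2 + (c*d - a*f)^2 + (a*e - b*d)^2
      = (a^2+b^2+c^2)*(d^2+e^2+f^2) - (a*d+b*e+c*f)^2 := by ring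

/-- For a C² solution `x` of the central-force system
`ẍ = ∂/∂x [(h(|x|)/2)(L²/|x|² + μ)]` with constant angular momentum `x × ẋ = L⃗`,
`|L⃗| = |L|`, the quantity `ε := ṙ²/2 + (1 − h(r))L²/(2r²) − h(r)μ/2` (with `r = |x|`,
`ṙ = (x·ẋ)/|x|`) is constant along the trajectory. -/
theorem central_force_energy_conserved
    (h : ℝ → ℝ) (hh : ContDiff ℝ 1 h) (μ L : ℝ) (Lvec : Fin 3 → ℝ)
    (hLnorm : Real.sqrt (∑ i, Lvec i ^ 2) = |L|)
    (x : ℝ → Fin 3 → ℝ)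
    (hx2 : ∀ i, ContDiff ℝ 2 (fun s => x s i))
    (hx0 : ∀ s, x s ≠ 0)
    (r : ℝ → ℝ) (hr : ∀ s, r s = Real.sqrt (∑ i, x s i ^ 2))
    (ode : ∀ s, ∀ i : Fin 3, deriv (deriv (fun t => x t i)) s
      = deriv (fun ρ => h ρ / 2 * (L ^ 2 / ρ ^ 2 + μ)) (r s) * (x s i / r s))
    (ang : ∀ s,
      x s 1 * deriv (fun t => x t 2) s - x s 2 * deriv (fun t => x t 1) s = Lvec 0 ∧
      x s 2 * deriv (fun t => x t 0) s - x s 0 * deriv (fun t => x t 2) s = Lvec 1 ∧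
      x s 0 * deriv (fun t => x t 1) s - x s 1 * deriv (fun t => x t 0) s = Lvec 2) :
    ∀ s₁ s₂ : ℝ,
      let rdot : ℝ → ℝ := fun s => (∑ i, x s i * deriv (fun t => x t i) s) / r s
      let ε : ℝ → ℝ := fun s =>
        (rdot s) ^ 2 / 2 + (1 - h (r s)) * L ^ 2 / (2 * (r s) ^ 2) - h (r s) * μ / 2
      ε s₁ = ε s₂ := by
  intro s₁ s₂ rdot ε
  -- positivity of r
  have hq_pos : ∀ s, (0:ℝ) < ∑ i, x s i ^ 2 := by
    intro s
    obtain ⟨i, hi⟩ : ∃ i, x s i ≠ 0 := by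
      by_contra hc; push_neg at hc; exact hx0 s (funext hc)
    have h1 : 0 < x s i ^ 2 := by positivity
    have h2 : x s i ^ 2 ≤ ∑ j, x s j ^ 2 :=
      Finset.single_le_sum (f := fun j => x s j ^ 2) (fun j _ => sq_nonneg _) (Finset.mem_univ i)
    linarith
  have hr_pos : ∀ s, 0 < r s := fun s => (hr s) ▸ Real.sqrt_pos.mpr (hq_pos s)
  have hr_ne : ∀ s, r s ≠ 0 := fun s => (hr_pos s).ne'
  have hr_sq : ∀ s, r s ^ 2 = ∑ i, x s i ^ 2 := fun s => by
    rw [hr s, Real.sq_sqrt (hq_pos s).le]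
  -- L² from Lvec
  have hL2 : (∑ i, Lvec i ^ 2) = L ^ 2 := by
    have h1 : (0:ℝ) ≤ ∑ i, Lvec i ^ 2 := Finset.sum_nonneg fun i _ => sq_nonneg _
    calc (∑ i, Lvec i ^ 2) = Real.sqrt (∑ i, Lvec i ^ 2) ^ 2 := (Real.sq_sqrt h1).symm
    _ = |L| ^ 2 := by rw [hLnorm]
    _ = L ^ 2 := sq_abs L
  -- differentiability
  have hdx : ∀ i, Differentiable ℝ (fun s => x s i) :=
    fun i => (hx2 i).differentiable (by norm_num)
  have hdv : ∀ i, Differentiable ℝ (deriv (fun s => x s i)) := by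
    intro i
    have h2 : ContDiff ℝ ((1:ℕ)+1) fun s => x s i := by exact_mod_cast hx2 i
    exact (contDiff_succ_iff_deriv.mp h2).2.2.differentiable (by norm_num)
  set V : ℝ → ℝ := fun ρ => h ρ / 2 * (L ^ 2 / ρ ^ 2 + μ) with hV
  have hVdiff : ∀ ρ : ℝ, ρ ≠ 0 → DifferentiableAt ℝ V ρ := by
    intro ρ hρ
    have h1 : DifferentiableAt ℝ h ρ := (hh.differentiable (by norm_num)) ρ
    have h2 : DifferentiableAt ℝ (fun ρ : ℝ => L ^ 2 / ρ ^ 2 + μ) ρ := by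
      apply DifferentiableAt.add_const
      exact (differentiableAt_const _).div (differentiableAt_pow 2) (pow_ne_zero 2 hρ)
    exact (h1.div_const 2).mul h2
  -- shorthand
  set p : ℝ → ℝ := fun s => ∑ i, x s i * deriv (fun t => x t i) s with hp
  -- r has derivative p/r
  have hrd : ∀ s, HasDerivAt r (p s / r s) s := by
    intro s
    have hq : HasDerivAt (fun s => ∑ i, x s i ^ 2) (2 * p s) s := by
      have : HasDerivAt (fun s => ∑ i, x s i ^ 2)
          (∑ i, 2 * x s i * deriv (fun t => x t i) s) s := by
        apply HasDerivAt.fun_sum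
        intro i _
        have := ((hdx i) s).hasDerivAt
        simpa [mul_comm] using this.fun_pow 2
      convert this using 1
      simp only [hp, Fin.sum_univ_three]
      ring
    have hsq : HasDerivAt Real.sqrt (1 / (2 * Real.sqrt (∑ i, x s i ^ 2)))
        (∑ i, x s i ^ 2) := Real.hasDerivAt_sqrt (hq_pos s).ne'
    have := hsq.comp s hq
    have heq : r = fun s => Real.sqrt (∑ i, x s i ^ 2) := funext hr
    rw [heq]
    refine this.congr_deriv (Eq.symm ?_)
    have hs0 : Real.sqrt (∑ i, x s i ^ 2) ≠ 0 := by rw [← hr s]; exact hr_ne s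
    show p s / Real.sqrt (∑ i, x s i ^ 2) = _
    field_simp
  -- energy function
  set E : ℝ → ℝ := fun s => (∑ i, (deriv (fun t => x t i) s) ^ 2) / 2 - V (r s) with hE
  have hE0 : ∀ s, HasDerivAt E 0 s := by
    intro s
    set V' := deriv V (r s) with hV'
    have hVd : HasDerivAt (fun s => V (r s)) (V' * (p s / r s)) s :=
      ((hVdiff (r s) (hr_ne s)).hasDerivAt).comp s (hrd s)
    have hK : HasDerivAt (fun s => (∑ i, (deriv (fun t => x t i) s) ^ 2) / 2)
        (V' * (p s / r s)) s := by
      have hK1 : HasDerivAt (fun s => ∑ i, (deriv (fun t => x t i) s) ^ 2)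
          (∑ i, 2 * deriv (fun t => x t i) s * (V' * (x s i / r s))) s := by
        apply HasDerivAt.fun_sum
        intro i _
        have hvi : HasDerivAt (deriv (fun t => x t i))
            (deriv (deriv (fun t => x t i)) s) s := ((hdv i) s).hasDerivAt
        rw [ode s i] at hvi
        simpa [mul_comm] using hvi.fun_pow 2
      have := hK1.div_const 2
      refine this.congr_deriv (Eq.symm ?_)
      simp only [hp, Fin.sum_univ_three]
      field_simp
    have := hK.fun_sub hVd
    simpa using this
  have hconst : E s₁ = E s₂ :=
    is_const_of_deriv_eq_zero (fun t => (hE0 t).differentiableAt)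
      (fun t => (hE0 t).deriv) s₁ s₂
  -- ε = E
  have hεE : ∀ s, ε s = E s := by
    intro s
    obtain ⟨a0, a1, a2⟩ := ang s
    have hlag : (r s ^ 2) * (∑ i, (deriv (fun t => x t i) s) ^ 2) - p s ^ 2 = L ^ 2 := by
      rw [hr_sq s, hp]
      rw [← hL2]
      simp only [Fin.sum_univ_three]
      rw [← a0, ← a1, ← a2]
      ring
    show (p s / r s) ^ 2 / 2 + (1 - h (r s)) * L ^ 2 / (2 * (r s) ^ 2) - h (r s) * μ / 2
        = (∑ i, (deriv (fun t => x t i) s) ^ 2) / 2 - V (r s)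
    rw [hV]
    have hrne := hr_ne s
    have hK : (∑ i, (deriv (fun t => x t i) s) ^ 2) = (p s ^ 2 + L ^ 2) / r s ^ 2 := by
      field_simp
      nlinarith [hlag]
    rw [hK]
    field_simp
    ring
  rw [hεE s₁, hεE s₂, hconst]
end

section
/- Let h₀ > 1, a₀ ≥ 0 and σ = ±1. The set of pairs (ṙ₀, E) ∈ ℝ² satisfying E² = ṙ₀² − a₀² together with the condition ((h₀−1)(E − σṙ₀) < 0 or (E = σṙ₀ ≥ 0)) is exactly the branch { (ṙ₀, E) : σṙ₀ ≥ a₀, E = ±√(ṙ₀² − a₀²) } of the hyperbola. -/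
/-- For `h₀ > 1`, `a₀ ≥ 0`, `σ = ±1`: the pairs `(ṙ₀, E)` with `E² = ṙ₀² − a₀²` and
`((h₀−1)(E − σṙ₀) < 0` or `E = σṙ₀ ≥ 0)` are exactly the branch
`{σṙ₀ ≥ a₀, E = ±√(ṙ₀² − a₀²)}` of the hyperbola. -/
theorem future_causal_branch_inside
    (h₀ a₀ σ : ℝ) (hh : 1 < h₀) (ha : 0 ≤ a₀) (hσ : σ = 1 ∨ σ = -1) :
    ∀ rdot E : ℝ,
      (E ^ 2 = rdot ^ 2 - a₀ ^ 2 ∧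
        ((h₀ - 1) * (E - σ * rdot) < 0 ∨ (E = σ * rdot ∧ 0 ≤ E)))
      ↔ (a₀ ≤ σ * rdot ∧
          (E = Real.sqrt (rdot ^ 2 - a₀ ^ 2) ∨ E = -Real.sqrt (rdot ^ 2 - a₀ ^ 2))) := by
  intro rdot E
  have hσ2 : σ ^ 2 = 1 := by rcases hσ with h | h <;> simp [h]
  have hs2 : (σ * rdot) ^ 2 = rdot ^ 2 := by rw [mul_pow, hσ2, one_mul]
  have h1 : (0:ℝ) < h₀ - 1 := by linarith
  constructor
  · rintro ⟨hE, hcond⟩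
    have hnn : 0 ≤ rdot ^ 2 - a₀ ^ 2 := hE ▸ sq_nonneg E
    have hEle : E ≤ σ * rdot := by
      rcases hcond with h | ⟨h, _⟩
      · nlinarith
      · exact h.le
    have hs : a₀ ≤ σ * rdot := by
      rcases hcond with h | ⟨h, h0⟩
      · have hlt : E < σ * rdot := by nlinarith
        rcases le_or_gt 0 (σ * rdot) with h2 | h2
        · nlinarith
        · nlinarith [sq_nonneg (E + σ * rdot)]
      · nlinarith
    refine ⟨hs, ?_⟩
    rcases le_or_gt 0 E with hE0 | hE0
    · left
      rw [← hE, Real.sqrt_sq hE0]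
    · right
      rw [← hE, Real.sqrt_sq_eq_abs, abs_of_neg hE0, neg_neg]
  · rintro ⟨hs, hE⟩
    have ha2 : a₀ ^ 2 ≤ rdot ^ 2 := by nlinarith
    have hnn : 0 ≤ rdot ^ 2 - a₀ ^ 2 := by linarith
    have hE2 : E ^ 2 = rdot ^ 2 - a₀ ^ 2 := by
      rcases hE with h | h <;> rw [h] <;>
        simp [neg_pow, Real.sq_sqrt hnn]
    refine ⟨hE2, ?_⟩
    have hEle : E ≤ σ * rdot := by
      rcases hE with h | h
      · have : Real.sqrt (rdot ^ 2 - a₀ ^ 2) ≤ σ * rdot := by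
          rw [show σ * rdot = Real.sqrt ((σ * rdot) ^ 2) from
            (Real.sqrt_sq (le_trans ha hs)).symm]
          apply Real.sqrt_le_sqrt
          nlinarith
        linarith [h ▸ this]
      · have := Real.sqrt_nonneg (rdot ^ 2 - a₀ ^ 2)
        rw [h]; linarith [le_trans ha hs]
    rcases eq_or_lt_of_le hEle with heq | hlt
    · right; exact ⟨heq, heq ▸ by nlinarith⟩
    · left; nlinarith
end

section
/- For future-directed causal geodesics (μ ∈ {0,1}) in a stationary spherically symmetric Kerr-Schild spacetime, the conserved quantity ε = (E² − μ)/2 satisfies: if h₀ ≥ 1 then ε ranges over [−μ/2, ∞), and if h₀ < 1 then ε ranges over [(a₀² − μ)/2, ∞), where a₀² = |1 − h₀|(L²/r₀² + μ). Concretely: if h₀ ≥ 1, for every ε ≥ −μ/2 there is admissible initial data with that ε, and every admissible datum has ε ≥ −μ/2; analogously for h₀ < 1. -/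
/-- Range of the conserved quantity `ε = (E² − μ)/2` over admissible initial data of
future-directed causal geodesics (μ ∈ {0,1}): for `h₀ ≥ 1`, `ε` ranges over `[−μ/2, ∞)`;
for `h₀ < 1`, `ε` ranges over `[(a₀² − μ)/2, ∞)`, where `a₀² = |1 − h₀|(L²/r₀² + μ)`. -/
theorem epsilon_range
    (σ μ r₀ L h₀ a₀ : ℝ) (hσ : σ = 1 ∨ σ = -1) (hμ : μ = 0 ∨ μ = 1) (hr₀ : 0 < r₀)
    (ha₀ : a₀ = Real.sqrt (|1 - h₀| * (L ^ 2 / r₀ ^ 2 + μ))) :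
    let Adm : ℝ → ℝ → Prop := fun rdot E =>
      (1 < h₀ → a₀ ≤ σ * rdot ∧
        (E = Real.sqrt (rdot ^ 2 - a₀ ^ 2) ∨ E = -Real.sqrt (rdot ^ 2 - a₀ ^ 2))) ∧
      (h₀ < 1 → a₀ ≤ σ * E ∧
        (rdot = Real.sqrt (E ^ 2 - a₀ ^ 2) ∨ rdot = -Real.sqrt (E ^ 2 - a₀ ^ 2))) ∧
      (h₀ = 1 → 0 ≤ σ * rdot ∧ E = σ * rdot)
    (1 ≤ h₀ →
      (∀ rdot E : ℝ, Adm rdot E → -μ / 2 ≤ (E ^ 2 - μ) / 2) ∧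
      (∀ ε : ℝ, -μ / 2 ≤ ε → ∃ rdot E : ℝ, Adm rdot E ∧ (E ^ 2 - μ) / 2 = ε)) ∧
    (h₀ < 1 →
      (∀ rdot E : ℝ, Adm rdot E → (a₀ ^ 2 - μ) / 2 ≤ (E ^ 2 - μ) / 2) ∧
      (∀ ε : ℝ, (a₀ ^ 2 - μ) / 2 ≤ ε → ∃ rdot E : ℝ, Adm rdot E ∧ (E ^ 2 - μ) / 2 = ε)) := by
  intro Adm
  have ha₀nn : 0 ≤ a₀ := ha₀ ▸ Real.sqrt_nonneg _
  have hσ2 : σ ^ 2 = 1 := by rcases hσ with h | h <;> simp [h]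
  constructor
  · intro hge
    constructor
    · intro rdot E _
      nlinarith [sq_nonneg E]
    · intro ε hε
      have hEnn : (0:ℝ) ≤ 2 * ε + μ := by
        rcases hμ with h | h <;> simp [h] at hε ⊢ <;> linarith
      set E := Real.sqrt (2 * ε + μ) with hE
      have hE2 : E ^ 2 = 2 * ε + μ := Real.sq_sqrt hEnn
      have hEnneg : 0 ≤ E := Real.sqrt_nonneg _
      refine ⟨σ * Real.sqrt (E ^ 2 + a₀ ^ 2), E, ⟨?_, ?_, ?_⟩, by linarith⟩
      · intro _
        have hsq : (σ * Real.sqrt (E ^ 2 + a₀ ^ 2)) ^ 2 = E ^ 2 + a₀ ^ 2 := by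
          rw [mul_pow, hσ2, one_mul, Real.sq_sqrt (by positivity)]
        constructor
        · have : σ * (σ * Real.sqrt (E ^ 2 + a₀ ^ 2)) = Real.sqrt (E ^ 2 + a₀ ^ 2) := by
            rw [← mul_assoc, ← sq, hσ2, one_mul]
          rw [this]
          have : a₀ = Real.sqrt (a₀ ^ 2) := (Real.sqrt_sq ha₀nn).symm
          rw [this]
          exact Real.sqrt_le_sqrt (by nlinarith [sq_nonneg E])
        · left
          rw [hsq]
          simp only [add_sub_cancel_right]
          exact (Real.sqrt_sq hEnneg).symm
      · intro hlt; linarith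
      · intro heq
        have ha0 : a₀ = 0 := by
          rw [ha₀, heq]; simp
        rw [ha0]
        have : σ * (σ * Real.sqrt (E ^ 2 + 0 ^ 2)) = Real.sqrt (E ^ 2 + 0 ^ 2) := by
          rw [← mul_assoc, ← sq, hσ2, one_mul]
        constructor
        · rw [this]; exact Real.sqrt_nonneg _
        · rw [this]
          simp only [ne_eq, OfNat.ofNat_ne_zero, not_false_eq_true, zero_pow, add_zero]
          exact (Real.sqrt_sq hEnneg).symm
  · intro hlt
    constructor
    · intro rdot E ⟨_, h2, _⟩
      obtain ⟨hle, _⟩ := h2 hlt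
      have : a₀ ^ 2 ≤ (σ * E) ^ 2 := by nlinarith
      rw [mul_pow, hσ2, one_mul] at this
      linarith
    · intro ε hε
      have ha2mu : a₀ ^ 2 - μ ≤ 2 * ε := by linarith
      have hEnn : (0:ℝ) ≤ 2 * ε + μ := by nlinarith [sq_nonneg a₀]
      set E := σ * Real.sqrt (2 * ε + μ) with hE
      have hE2 : E ^ 2 = 2 * ε + μ := by
        rw [hE, mul_pow, hσ2, one_mul, Real.sq_sqrt hEnn]
      refine ⟨Real.sqrt (E ^ 2 - a₀ ^ 2), E, ⟨?_, ?_, ?_⟩, by linarith⟩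
      · intro h; linarith
      · intro _
        refine ⟨?_, Or.inl rfl⟩
        have : σ * E = Real.sqrt (2 * ε + μ) := by
          rw [hE, ← mul_assoc, ← sq, hσ2, one_mul]
        rw [this]
        have : a₀ = Real.sqrt (a₀ ^ 2) := (Real.sqrt_sq ha₀nn).symm
        rw [this]
        exact Real.sqrt_le_sqrt (by linarith)
      · intro h; linarith
end

section
/- The dynamical system r' = ru, θ' = v, v' = −(β+1)uv, u' = r^{2−2β}Λ(r) − βu² + v², with Λ(r) = −(1/r)V'(r), admits the two first integrals L = v r^{β+1} and ε = (1/2) r^{2β}(u² + v²) + V(r); i.e. both quantities are constant along any solution. -/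
/-- The McGehee-transformed system `r' = ru, θ' = v, v' = −(β+1)uv,
`u' = r^{2−2β}Λ(r) − βu² + v²` (with `Λ(r) = −V'(r)/r`) admits the two first integrals
`L = v r^{β+1}` and `ε = (1/2) r^{2β}(u² + v²) + V(r)`. -/
theorem mcgehee_first_integrals
    (a b β : ℝ) (ha : 0 < a) (hab : a < b)
    (V V' Λ : ℝ → ℝ)
    (hV : ∀ ρ ∈ Set.Ioo a b, HasDerivAt V (V' ρ) ρ)
    (hΛ : ∀ ρ, Λ ρ = -(V' ρ) / ρ)
    (r θ u v : ℝ → ℝ)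
    (hrange : ∀ s, r s ∈ Set.Ioo a b)
    (hsys : ∀ s, HasDerivAt r (r s * u s) s ∧ HasDerivAt θ (v s) s ∧
      HasDerivAt v (-(β + 1) * u s * v s) s ∧
      HasDerivAt u (r s ^ (2 - 2 * β) * Λ (r s) - β * (u s) ^ 2 + (v s) ^ 2) s) :
    ∀ s₁ s₂ : ℝ,
      v s₁ * r s₁ ^ (β + 1) = v s₂ * r s₂ ^ (β + 1) ∧
      (1 / 2) * r s₁ ^ (2 * β) * ((u s₁) ^ 2 + (v s₁) ^ 2) + V (r s₁)
        = (1 / 2) * r s₂ ^ (2 * β) * ((u s₂) ^ 2 + (v s₂) ^ 2) + V (r s₂) := by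
  have hr0 : ∀ s, 0 < r s := fun s => lt_trans ha (hrange s).1
  have hL : ∀ s, HasDerivAt (fun t => v t * r t ^ (β + 1)) 0 s := by
    intro s
    obtain ⟨hr, hθ, hv, hu⟩ := hsys s
    have hpow : HasDerivAt (fun t => r t ^ (β + 1))
        ((r s * u s) * (β + 1) * r s ^ (β + 1 - 1)) s :=
      hr.rpow_const (Or.inl (hr0 s).ne')
    have h := hv.mul hpow
    refine h.congr_deriv (Eq.symm ?_)
    have h1 : r s ^ (β + 1 - 1) * r s = r s ^ (β + 1) := by
      rw [← Real.rpow_add_one (hr0 s).ne']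
      ring_nf
    linear_combination (-(β + 1) * u s * v s) * h1
  have hE : ∀ s, HasDerivAt
      (fun t => (1 / 2) * r t ^ (2 * β) * ((u t) ^ 2 + (v t) ^ 2) + V (r t)) 0 s := by
    intro s
    obtain ⟨hr, hθ, hv, hu⟩ := hsys s
    have hP : HasDerivAt (fun t => r t ^ (2 * β))
        ((r s * u s) * (2 * β) * r s ^ (2 * β - 1)) s :=
      hr.rpow_const (Or.inl (hr0 s).ne')
    have hG : HasDerivAt (fun t => (u t) ^ 2 + (v t) ^ 2)
        (2 * u s ^ 1 * (r s ^ (2 - 2 * β) * Λ (r s) - β * (u s) ^ 2 + (v s) ^ 2)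
          + 2 * v s ^ 1 * (-(β + 1) * u s * v s)) s := by
      have := ((hu.pow 2).add (hv.pow 2))
      exact this.congr_deriv (by ring)
    have hVr : HasDerivAt (fun t => V (r t)) (V' (r s) * (r s * u s)) s :=
      (hV (r s) (hrange s)).comp s hr
    have h := (((hP.const_mul (1 / 2 : ℝ)).mul hG).add hVr)
    have hmul : (fun t => (1 / 2) * r t ^ (2 * β) * ((u t) ^ 2 + (v t) ^ 2) + V (r t))
        = (fun t => ((1 / 2) * r t ^ (2 * β)) * ((u t) ^ 2 + (v t) ^ 2) + V (r t)) := by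
      funext t; ring
    rw [hmul]
    refine h.congr_deriv (Eq.symm ?_)
    have h2 : r s ^ (2 * β - 1) * r s = r s ^ (2 * β) := by
      rw [← Real.rpow_add_one (hr0 s).ne']
      ring_nf
    have h3 : r s ^ (2 * β) * r s ^ (2 - 2 * β) = r s * r s := by
      rw [← Real.rpow_add (hr0 s)]
      norm_num
      first
      | ring
      | (rw [show (2 : ℝ) = ((2 : ℕ) : ℝ) by norm_num, Real.rpow_natCast]; ring)
    have h4 : r s * Λ (r s) = -(V' (r s)) := by
      rw [hΛ (r s)]
      field_simp [(hr0 s).ne']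
    linear_combination (-(β * u s * ((u s) ^ 2 + (v s) ^ 2))) * h2
      + (-(u s * Λ (r s))) * h3 + (-(u s * r s)) * h4
  intro s₁ s₂
  constructor
  · exact is_const_of_deriv_eq_zero (fun s => (hL s).differentiableAt)
      (fun s => (hL s).deriv) s₁ s₂
  · exact is_const_of_deriv_eq_zero (fun s => (hE s).differentiableAt)
      (fun s => (hE s).deriv) s₁ s₂
end

section
/- Suppose there is γ > 0 such that f(r) := r^γ V(r) extends to a C¹ function on [0,b). Then for any β ≤ −γ/2 the right-hand side of the McGehee-transformed system r' = ru, θ' = v, v' = −(β+1)uv, u' = r^{2−2β}Λ(r) − βu² + v² (where Λ(r) = γ f(r) r^{−2−γ} − f'(r) r^{−1−γ}) extends continuously to r = 0, i.e. to [0,b) × S¹ × ℝ × ℝ. -/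
lemma rpow_const_continuous {q : ℝ} (hq : 0 ≤ q) :
    Continuous fun x : ℝ => x ^ q := by
  rw [continuous_iff_continuousAt]
  intro x
  exact Real.continuousAt_rpow_const x q (Or.inr hq)

/-- If `f(r) := r^γ V(r)` (γ > 0) extends to a C¹ function on `[0,b)`, then for any
`β ≤ −γ/2` the right-hand side of the McGehee-transformed system
`r' = ru, θ' = v, v' = −(β+1)uv, u' = r^{2−2β}Λ(r) − βu² + v²`
(with `Λ(r) = γ f(r) r^{−2−γ} − f'(r) r^{−1−γ}`) extends continuously to `r = 0`. -/
theorem mcgehee_rhs_continuous_extension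
    (b γ β : ℝ) (hb : 0 < b) (hγ : 0 < γ) (hβ : β ≤ -γ / 2)
    (V f f' Λ : ℝ → ℝ)
    (hf : ∀ ρ ∈ Set.Ico 0 b, HasDerivWithinAt f (f' ρ) (Set.Ico 0 b) ρ)
    (hf' : ContinuousOn f' (Set.Ico 0 b))
    (hfV : ∀ ρ ∈ Set.Ioo 0 b, f ρ = ρ ^ γ * V ρ)
    (hΛ : ∀ ρ ∈ Set.Ioo 0 b, Λ ρ = γ * f ρ * ρ ^ (-2 - γ) - f' ρ * ρ ^ (-1 - γ)) :
    ∃ G : ℝ × ℝ × ℝ × ℝ → ℝ × ℝ × ℝ × ℝ,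
      ContinuousOn G {p : ℝ × ℝ × ℝ × ℝ | p.1 ∈ Set.Ico 0 b} ∧
      ∀ p : ℝ × ℝ × ℝ × ℝ, p.1 ∈ Set.Ioo 0 b →
        G p = (p.1 * p.2.2.1, p.2.2.2,
          p.1 ^ (2 - 2 * β) * Λ p.1 - β * p.2.2.1 ^ 2 + p.2.2.2 ^ 2,
          -(β + 1) * p.2.2.1 * p.2.2.2) := by
  have hq1 : (0:ℝ) ≤ -2 * β - γ := by linarith
  have hq2 : (0:ℝ) ≤ 1 - 2 * β - γ := by linarith
  refine ⟨fun p => (p.1 * p.2.2.1, p.2.2.2,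
      γ * f p.1 * p.1 ^ (-2 * β - γ) - f' p.1 * p.1 ^ (1 - 2 * β - γ)
        - β * p.2.2.1 ^ 2 + p.2.2.2 ^ 2,
      -(β + 1) * p.2.2.1 * p.2.2.2), ?_, ?_⟩
  · have hfc : ContinuousOn f (Set.Ico 0 b) :=
      fun ρ hρ => (hf ρ hρ).continuousWithinAt
    have hmap : Set.MapsTo (fun p : ℝ × ℝ × ℝ × ℝ => p.1)
        {p : ℝ × ℝ × ℝ × ℝ | p.1 ∈ Set.Ico 0 b} (Set.Ico 0 b) := fun p hp => hp
    have hfc' : ContinuousOn (fun p : ℝ × ℝ × ℝ × ℝ => f p.1)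
        {p : ℝ × ℝ × ℝ × ℝ | p.1 ∈ Set.Ico 0 b} :=
      hfc.comp continuous_fst.continuousOn hmap
    have hf'c : ContinuousOn (fun p : ℝ × ℝ × ℝ × ℝ => f' p.1)
        {p : ℝ × ℝ × ℝ × ℝ | p.1 ∈ Set.Ico 0 b} :=
      hf'.comp continuous_fst.continuousOn hmap
    have h1 : Continuous (fun p : ℝ × ℝ × ℝ × ℝ => p.1 ^ (-2 * β - γ)) :=
      (rpow_const_continuous hq1).comp continuous_fst
    have h2 : Continuous (fun p : ℝ × ℝ × ℝ × ℝ => p.1 ^ (1 - 2 * β - γ)) :=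
      (rpow_const_continuous hq2).comp continuous_fst
    have hu : Continuous (fun p : ℝ × ℝ × ℝ × ℝ => p.2.2.1) :=
      continuous_fst.comp (continuous_snd.comp continuous_snd)
    have hv : Continuous (fun p : ℝ × ℝ × ℝ × ℝ => p.2.2.2) :=
      continuous_snd.comp (continuous_snd.comp continuous_snd)
    refine ContinuousOn.prodMk ?_ (ContinuousOn.prodMk ?_ (ContinuousOn.prodMk ?_ ?_))
    · exact (continuous_fst.mul hu).continuousOn
    · exact hv.continuousOn
    · exact ((((continuousOn_const.mul hfc').mul h1.continuousOn).sub
        (hf'c.mul h2.continuousOn)).sub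
        (continuousOn_const.mul (hu.pow 2).continuousOn)).add
        (hv.pow 2).continuousOn
    · exact ((continuous_const.mul hu).mul hv).continuousOn
  · rintro ⟨r, θ, u, v⟩ hr
    simp only [Set.mem_Ioo] at hr
    have hr0 : 0 < r := hr.1
    have key : r ^ (2 - 2 * β) * Λ r =
        γ * f r * r ^ (-2 * β - γ) - f' r * r ^ (1 - 2 * β - γ) := by
      rw [hΛ r ⟨hr.1, hr.2⟩, mul_sub,
        show (-2 * β - γ) = (2 - 2 * β) + (-2 - γ) by ring,
        show (1 - 2 * β - γ) = (2 - 2 * β) + (-1 - γ) by ring,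
        Real.rpow_add hr0, Real.rpow_add hr0]
      ring
    rw [key]
end

section
/- Substituting the first integral v = L r^{−(β+1)} into the McGehee-transformed system yields the reduced system r' = ru, u' = r^{−2(β+1)}(L² + r⁴Λ(r)) − βu², θ' = L r^{−(β+1)}, which admits the first integral ε = L²/(2r²) + (1/2)u² r^{2β} + V(r). Moreover, solutions of the full system with angular momentum L project to solutions of the reduced system, and conversely. -/
private lemma rpow_alg (ρ β L Λv u : ℝ) (hρ : 0 < ρ) :
    ρ ^ (-2 * (β + 1)) * (L ^ 2 + ρ ^ 4 * Λv) - β * u ^ 2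
      = ρ ^ (2 - 2 * β) * Λv - β * u ^ 2 + (L * ρ ^ (-(β + 1))) ^ 2 := by
  have h1 : ρ ^ (-2 * (β + 1) : ℝ) = ρ ^ (-(β + 1) : ℝ) * ρ ^ (-(β + 1) : ℝ) := by
    rw [← Real.rpow_add hρ]; ring_nf
  have h2 : ρ ^ (-2 * (β + 1) : ℝ) * ρ ^ 4 = ρ ^ (2 - 2 * β : ℝ) := by
    rw [show (ρ:ℝ) ^ 4 = ρ ^ ((4:ℕ):ℝ) by rw [Real.rpow_natCast],
      ← Real.rpow_add hρ]
    congr 1; push_cast; ring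
  calc ρ ^ (-2 * (β + 1)) * (L ^ 2 + ρ ^ 4 * Λv) - β * u ^ 2
      = (ρ ^ (-2 * (β + 1)) * ρ ^ 4) * Λv - β * u ^ 2 + L ^ 2 * ρ ^ (-2 * (β + 1)) := by ring
    _ = _ := by rw [h2, h1]; ring

private lemma deriv_val (ρ β L u : ℝ) (hρ : 0 < ρ) :
    L * ((ρ * u) * (-(β + 1)) * ρ ^ (-(β + 1) - 1)) = -(β + 1) * u * (L * ρ ^ (-(β + 1))) := by
  rw [show (-(β+1)-1 : ℝ) = -(β+1) + (-1) by ring, Real.rpow_add hρ, Real.rpow_neg_one]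
  field_simp

/-- Substituting the first integral `v = L r^{−(β+1)}` into the McGehee system yields the
reduced system `r' = ru, u' = r^{−2(β+1)}(L² + r⁴Λ(r)) − βu², θ' = L r^{−(β+1)}`, which
admits the first integral `ε = L²/(2r²) + (1/2)u²r^{2β} + V(r)`; solutions of the full
system with angular momentum `L` project to solutions of the reduced system and
conversely. -/
theorem mcgehee_reduced_system
    (a b β L : ℝ) (ha : 0 < a) (hab : a < b)
    (V V' Λ : ℝ → ℝ)
    (hV : ∀ ρ ∈ Set.Ioo a b, HasDerivAt V (V' ρ) ρ)
    (hΛ : ∀ ρ, Λ ρ = -(V' ρ) / ρ) :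
    -- full solutions with angular momentum L project to reduced solutions
    (∀ r θ u v : ℝ → ℝ, (∀ s, r s ∈ Set.Ioo a b) →
      (∀ s, HasDerivAt r (r s * u s) s ∧ HasDerivAt θ (v s) s ∧
        HasDerivAt v (-(β + 1) * u s * v s) s ∧
        HasDerivAt u (r s ^ (2 - 2 * β) * Λ (r s) - β * (u s) ^ 2 + (v s) ^ 2) s) →
      (∀ s, v s * r s ^ (β + 1) = L) →
      ∀ s, HasDerivAt r (r s * u s) s ∧
        HasDerivAt u (r s ^ (-2 * (β + 1)) * (L ^ 2 + (r s) ^ 4 * Λ (r s)) - β * (u s) ^ 2) s ∧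
        HasDerivAt θ (L * r s ^ (-(β + 1))) s) ∧
    -- reduced solutions lift to full solutions with v = L r^{−(β+1)}
    (∀ r θ u : ℝ → ℝ, (∀ s, r s ∈ Set.Ioo a b) →
      (∀ s, HasDerivAt r (r s * u s) s ∧
        HasDerivAt u (r s ^ (-2 * (β + 1)) * (L ^ 2 + (r s) ^ 4 * Λ (r s)) - β * (u s) ^ 2) s ∧
        HasDerivAt θ (L * r s ^ (-(β + 1))) s) →
      ∀ s, HasDerivAt r (r s * u s) s ∧
        HasDerivAt θ (L * r s ^ (-(β + 1))) s ∧
        HasDerivAt (fun t => L * r t ^ (-(β + 1)))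
          (-(β + 1) * u s * (L * r s ^ (-(β + 1)))) s ∧
        HasDerivAt u (r s ^ (2 - 2 * β) * Λ (r s) - β * (u s) ^ 2
          + (L * r s ^ (-(β + 1))) ^ 2) s) ∧
    -- first integral of the reduced system
    (∀ r θ u : ℝ → ℝ, (∀ s, r s ∈ Set.Ioo a b) →
      (∀ s, HasDerivAt r (r s * u s) s ∧
        HasDerivAt u (r s ^ (-2 * (β + 1)) * (L ^ 2 + (r s) ^ 4 * Λ (r s)) - β * (u s) ^ 2) s ∧
        HasDerivAt θ (L * r s ^ (-(β + 1))) s) →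
      ∀ s₁ s₂ : ℝ,
        L ^ 2 / (2 * (r s₁) ^ 2) + (1 / 2) * (u s₁) ^ 2 * r s₁ ^ (2 * β) + V (r s₁)
          = L ^ 2 / (2 * (r s₂) ^ 2) + (1 / 2) * (u s₂) ^ 2 * r s₂ ^ (2 * β) + V (r s₂)) := by
  refine ⟨?_, ?_, ?_⟩
  · -- part 1
    intro r θ u v hr h hL s
    have hρ : 0 < r s := lt_trans ha (hr s).1
    obtain ⟨hr', hθ', hv', hu'⟩ := h s
    have hvs : v s = L * r s ^ (-(β + 1)) := by
      have h0 : (r s : ℝ) ^ (β + 1) ≠ 0 := (Real.rpow_pos_of_pos hρ _).ne'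
      rw [Real.rpow_neg hρ.le]
      field_simp
      exact hL s
    refine ⟨hr', ?_, ?_⟩
    · have := hu'
      rw [show r s ^ (2 - 2 * β) * Λ (r s) - β * (u s) ^ 2 + (v s) ^ 2
          = r s ^ (-2 * (β + 1)) * (L ^ 2 + (r s) ^ 4 * Λ (r s)) - β * (u s) ^ 2 by
        rw [hvs, rpow_alg (r s) β L (Λ (r s)) (u s) hρ]] at this
      exact this
    · rwa [hvs] at hθ'
  · -- part 2
    intro r θ u hr h s
    have hρ : 0 < r s := lt_trans ha (hr s).1
    obtain ⟨hr', hu', hθ'⟩ := h s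
    refine ⟨hr', hθ', ?_, ?_⟩
    · have hd : HasDerivAt (fun t => r t ^ (-(β + 1)))
          ((r s * u s) * (-(β + 1)) * r s ^ (-(β + 1) - 1)) s :=
        hr'.rpow_const (Or.inl hρ.ne')
      have := hd.const_mul L
      rwa [deriv_val (r s) β L (u s) hρ] at this
    · have := hu'
      rw [rpow_alg (r s) β L (Λ (r s)) (u s) hρ] at this
      exact this
  · -- part 3: first integral
    intro r θ u hr h
    have key : ∀ s, HasDerivAt
        (fun t => L ^ 2 / (2 * (r t) ^ 2) + (1 / 2) * (u t) ^ 2 * r t ^ (2 * β) + V (r t)) 0 s := by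
      intro s
      have hρ : 0 < r s := lt_trans ha (hr s).1
      obtain ⟨hr', hu', -⟩ := h s
      have hden : HasDerivAt (fun t => 2 * (r t) ^ 2)
          (2 * ((2:ℕ) * r s ^ (2 - 1) * (r s * u s))) s := (hr'.pow 2).const_mul 2
      have hd1 : HasDerivAt (fun t => L ^ 2 / (2 * (r t) ^ 2))
          ((0 * (2 * (r s) ^ 2) - L ^ 2 * (2 * ((2:ℕ) * r s ^ (2 - 1) * (r s * u s))))
            / (2 * (r s) ^ 2) ^ 2) s :=
        (hasDerivAt_const s (L ^ 2)).div hden (by positivity)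
      have hd2 : HasDerivAt (fun t => (1 / 2) * (u t) ^ 2 * r t ^ (2 * β))
          ((1 / 2 * ((2:ℕ) * u s ^ (2 - 1)
              * (r s ^ (-2 * (β + 1)) * (L ^ 2 + (r s) ^ 4 * Λ (r s)) - β * (u s) ^ 2)))
            * r s ^ (2 * β)
           + (1 / 2) * (u s) ^ 2 * ((r s * u s) * (2 * β) * r s ^ (2 * β - 1))) s :=
        ((hu'.pow 2).const_mul (1 / 2)).mul (hr'.rpow_const (Or.inl hρ.ne'))
      have hd3 : HasDerivAt (fun t => V (r t)) (V' (r s) * (r s * u s)) s :=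
        (hV (r s) (hr s)).comp s hr'
      have hsum := (hd1.add hd2).add hd3
      have hval : (0 * (2 * (r s) ^ 2) - L ^ 2 * (2 * ((2:ℕ) * r s ^ (2 - 1) * (r s * u s))))
            / (2 * (r s) ^ 2) ^ 2
          + ((1 / 2 * ((2:ℕ) * u s ^ (2 - 1)
              * (r s ^ (-2 * (β + 1)) * (L ^ 2 + (r s) ^ 4 * Λ (r s)) - β * (u s) ^ 2)))
            * r s ^ (2 * β)
           + (1 / 2) * (u s) ^ 2 * ((r s * u s) * (2 * β) * r s ^ (2 * β - 1)))
          + V' (r s) * (r s * u s) = 0 := by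
        have hV' : V' (r s) = -(Λ (r s)) * r s := by
          have h0 := hΛ (r s)
          field_simp at h0
          linarith
        have hA : (r s : ℝ) ^ (2 * β - 1) = r s ^ (2 * β) / r s := by
          rw [Real.rpow_sub hρ, Real.rpow_one]
        have hB : (r s : ℝ) ^ (-2 * (β + 1)) = (r s ^ (2 * β) * (r s) ^ 2)⁻¹ := by
          rw [show ((r s : ℝ)) ^ 2 = r s ^ ((2:ℕ):ℝ) by rw [Real.rpow_natCast],
            ← Real.rpow_add hρ, ← Real.rpow_neg hρ.le]
          congr 1; push_cast; ring
        rw [hV', hA, hB]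
        have hApos : (0:ℝ) < r s ^ (2 * β) := Real.rpow_pos_of_pos hρ _
        field_simp
        ring
      rw [hval] at hsum
      exact hsum
    intro s₁ s₂
    exact is_const_of_deriv_eq_zero
      (fun t => (key t).differentiableAt) (fun t => (key t).deriv) s₁ s₂
end

section
/- If L ≠ 0 and there is γ > 0 such that r^γ V(r) extends C¹ to r = 0, then for β ≤ min{−1, −γ/2} the reduced system r' = ru, u' = r^{−2(β+1)}(L² + r⁴Λ(r)) − βu², θ' = L r^{−(β+1)} extends continuously to [0,b) × S¹ × ℝ. -/
/-- If `L ≠ 0` and `r^γ V(r)` extends C¹ to `r = 0` (γ > 0), then for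
`β ≤ min{−1, −γ/2}` the reduced McGehee system
`r' = ru, u' = r^{−2(β+1)}(L² + r⁴Λ(r)) − βu², θ' = L r^{−(β+1)}`
extends continuously to `r = 0`. -/
theorem mcgehee_reduced_continuous_extension
    (b γ β L : ℝ) (hb : 0 < b) (hγ : 0 < γ) (hL : L ≠ 0)
    (hβ : β ≤ min (-1) (-γ / 2))
    (V f f' Λ : ℝ → ℝ)
    (hf : ∀ ρ ∈ Set.Ico 0 b, HasDerivWithinAt f (f' ρ) (Set.Ico 0 b) ρ)
    (hf' : ContinuousOn f' (Set.Ico 0 b))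
    (hfV : ∀ ρ ∈ Set.Ioo 0 b, f ρ = ρ ^ γ * V ρ)
    (hΛ : ∀ ρ ∈ Set.Ioo 0 b, Λ ρ = γ * f ρ * ρ ^ (-2 - γ) - f' ρ * ρ ^ (-1 - γ)) :
    ∃ G : ℝ × ℝ × ℝ → ℝ × ℝ × ℝ,
      ContinuousOn G {p : ℝ × ℝ × ℝ | p.1 ∈ Set.Ico 0 b} ∧
      ∀ p : ℝ × ℝ × ℝ, p.1 ∈ Set.Ioo 0 b →
        G p = (p.1 * p.2.1,
          p.1 ^ (-2 * (β + 1)) * (L ^ 2 + p.1 ^ 4 * Λ p.1) - β * p.2.1 ^ 2,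
          L * p.1 ^ (-(β + 1))) := by
  have hβ1 : β ≤ -1 := hβ.trans (min_le_left _ _)
  have hβ2 : β ≤ -γ / 2 := hβ.trans (min_le_right _ _)
  have hcf : ContinuousOn f (Set.Ico 0 b) := fun x hx => (hf x hx).continuousWithinAt
  have hrp : ∀ e : ℝ, 0 ≤ e → Continuous fun x : ℝ => x ^ e := by
    intro e he
    refine continuous_iff_continuousAt.2 fun x => ?_
    exact Real.continuousAt_rpow_const x e (Or.inr he)
  have he1 : (0:ℝ) ≤ -2 * (β + 1) := by nlinarith
  have he2 : (0:ℝ) ≤ -2 * β - γ := by nlinarith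
  have he3 : (0:ℝ) ≤ -2 * β + 1 - γ := by nlinarith
  have he4 : (0:ℝ) ≤ -(β + 1) := by nlinarith
  refine ⟨fun p => (p.1 * p.2.1,
    L ^ 2 * p.1 ^ (-2 * (β + 1)) + γ * f p.1 * p.1 ^ (-2 * β - γ)
      - f' p.1 * p.1 ^ (-2 * β + 1 - γ) - β * p.2.1 ^ 2,
    L * p.1 ^ (-(β + 1))), ?_, ?_⟩
  · have hmap : Set.MapsTo (Prod.fst : ℝ × ℝ × ℝ → ℝ)
        {p : ℝ × ℝ × ℝ | p.1 ∈ Set.Ico 0 b} (Set.Ico 0 b) := fun p hp => hp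
    have hcf1 : ContinuousOn (fun p : ℝ × ℝ × ℝ => f p.1)
        {p : ℝ × ℝ × ℝ | p.1 ∈ Set.Ico 0 b} :=
      hcf.comp continuous_fst.continuousOn hmap
    have hcf'1 : ContinuousOn (fun p : ℝ × ℝ × ℝ => f' p.1)
        {p : ℝ × ℝ × ℝ | p.1 ∈ Set.Ico 0 b} :=
      hf'.comp continuous_fst.continuousOn hmap
    refine ContinuousOn.prodMk ?_ (ContinuousOn.prodMk ?_ ?_)
    · exact (continuous_fst.mul (continuous_fst.comp continuous_snd)).continuousOn
    · refine ContinuousOn.sub (ContinuousOn.sub (ContinuousOn.add ?_ ?_) ?_) ?_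
      · exact (continuous_const.mul ((hrp _ he1).comp continuous_fst)).continuousOn
      · exact ((continuous_const.continuousOn.mul hcf1).mul
          ((hrp _ he2).comp continuous_fst).continuousOn)
      · exact hcf'1.mul ((hrp _ he3).comp continuous_fst).continuousOn
      · exact (continuous_const.mul
          ((continuous_fst.comp continuous_snd).pow 2)).continuousOn
    · exact (continuous_const.mul ((hrp _ he4).comp continuous_fst)).continuousOn
  · intro p hp
    have hr : 0 < p.1 := hp.1
    have h4 : (p.1 : ℝ) ^ (4 : ℕ) = p.1 ^ ((4 : ℝ)) := by
      rw [← Real.rpow_natCast p.1 4]; norm_num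
    have ha : p.1 ^ (-2 * β - γ) = p.1 ^ (-2 * (β + 1)) * p.1 ^ ((4:ℝ)) * p.1 ^ (-2 - γ) := by
      rw [← Real.rpow_add hr, ← Real.rpow_add hr]; ring_nf
    have hb2 : p.1 ^ (-2 * β + 1 - γ) = p.1 ^ (-2 * (β + 1)) * p.1 ^ ((4:ℝ)) * p.1 ^ (-1 - γ) := by
      rw [← Real.rpow_add hr, ← Real.rpow_add hr]; ring_nf
    rw [hΛ p.1 hp]
    refine Prod.ext rfl (Prod.ext ?_ rfl)
    simp only
    rw [h4, ha, hb2]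
    ring
end

section
/- For the Schwarzschild potential V(r) = −M L²/r³ − μM/r with β = −3/2, the reduced McGehee system takes the form r' = ru, u' = r(L² − μMr) − 3L²M + (3/2)u², θ' = L√r, and the quantity ε = u²/(2r³) + L²/(2r²) − M(L²/r³ + μ/r) is constant along its solutions (for r > 0). -/
/-- For the Schwarzschild potential `V(r) = −ML²/r³ − μM/r` with `β = −3/2`, the reduced
McGehee system takes the form `r' = ru, u' = r(L² − μMr) − 3L²M + (3/2)u², θ' = L√r`,
and `ε = u²/(2r³) + L²/(2r²) − M(L²/r³ + μ/r)` is constant along its solutions. -/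
theorem schwarzschild_reduced_system
    (M L μ : ℝ) (hM : 0 < M) (hμ : μ = -1 ∨ μ = 0 ∨ μ = 1)
    (Λ : ℝ → ℝ)
    (hΛ : ∀ ρ : ℝ, 0 < ρ → Λ ρ = -3 * M * L ^ 2 / ρ ^ 5 - μ * M / ρ ^ 3) :
    -- the reduced McGehee right-hand side with β = −3/2 takes the stated form
    (∀ r u : ℝ, 0 < r →
      r ^ (-2 * ((-3 / 2 : ℝ) + 1)) * (L ^ 2 + r ^ 4 * Λ r) - (-3 / 2 : ℝ) * u ^ 2
        = r * (L ^ 2 - μ * M * r) - 3 * L ^ 2 * M + (3 / 2) * u ^ 2 ∧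
      L * r ^ (-((-3 / 2 : ℝ) + 1)) = L * Real.sqrt r) ∧
    -- ε is a first integral
    (∀ r u θ : ℝ → ℝ, (∀ s, 0 < r s) →
      (∀ s, HasDerivAt r (r s * u s) s ∧
        HasDerivAt u (r s * (L ^ 2 - μ * M * r s) - 3 * L ^ 2 * M + (3 / 2) * (u s) ^ 2) s ∧
        HasDerivAt θ (L * Real.sqrt (r s)) s) →
      ∀ s₁ s₂ : ℝ,
        (u s₁) ^ 2 / (2 * (r s₁) ^ 3) + L ^ 2 / (2 * (r s₁) ^ 2)
            - M * (L ^ 2 / (r s₁) ^ 3 + μ / (r s₁))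
          = (u s₂) ^ 2 / (2 * (r s₂) ^ 3) + L ^ 2 / (2 * (r s₂) ^ 2)
            - M * (L ^ 2 / (r s₂) ^ 3 + μ / (r s₂))) := by
  constructor
  · intro r u hr
    constructor
    · rw [hΛ r hr, show (-2 * ((-3 / 2 : ℝ) + 1)) = (1 : ℝ) by norm_num, Real.rpow_one]
      field_simp
      ring
    · rw [show (-((-3 / 2 : ℝ) + 1)) = (1 / 2 : ℝ) by norm_num, Real.sqrt_eq_rpow]
  · intro r u θ hrpos hsys s₁ s₂
    set E : ℝ → ℝ := fun s =>
      (u s) ^ 2 / (2 * (r s) ^ 3) + L ^ 2 / (2 * (r s) ^ 2)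
        - M * (L ^ 2 / (r s) ^ 3 + μ / (r s))
    have key : ∀ s, HasDerivAt E 0 s := by
      intro s
      obtain ⟨hr, hu, -⟩ := hsys s
      have hrne : r s ≠ 0 := (hrpos s).ne'
      have h1 : HasDerivAt (fun s => (u s) ^ 2)
          (2 * u s ^ 1 * (r s * (L ^ 2 - μ * M * r s) - 3 * L ^ 2 * M + 3 / 2 * u s ^ 2)) s := by
        simpa using hu.fun_pow 2
      have h2 : HasDerivAt (fun s => 2 * (r s) ^ 3) (2 * (3 * r s ^ 2 * (r s * u s))) s := by
        simpa [mul_assoc] using (hr.pow 3).const_mul 2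
      have h3 : HasDerivAt (fun s => 2 * (r s) ^ 2) (2 * (2 * r s ^ 1 * (r s * u s))) s := by
        simpa [mul_assoc] using (hr.pow 2).const_mul 2
      have h4 : HasDerivAt (fun s => (r s) ^ 3) (3 * r s ^ 2 * (r s * u s)) s := by
        simpa using hr.fun_pow 3
      have hA := h1.fun_div h2 (by positivity)
      have hB := (hasDerivAt_const s (L ^ 2)).fun_div h3 (by positivity)
      have hC := (hasDerivAt_const s (L ^ 2)).fun_div h4 (by positivity)
      have hD := (hasDerivAt_const s μ).fun_div hr hrne
      have hE : HasDerivAt E _ s := ((hA.add hB).sub ((hC.add hD).const_mul M))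
      convert hE using 1
      field_simp
      ring
    have hdiff : Differentiable ℝ E := fun s => (key s).differentiableAt
    have hderiv : ∀ s, deriv E s = 0 := fun s => (key s).deriv
    exact is_const_of_deriv_eq_zero hdiff hderiv s₁ s₂
end

section
/- For the Schwarzschild null system (μ = 0) r' = ru, u' = rL² − 3L²M + (3/2)u² with L ≠ 0, the fixed points are (r,u) = (0, ±√(2M)L) and (r,u) = (3M, 0). The linearization at (3M,0) has eigenvalues ±√(3ML²), and at (0, ±√(2M)L) has eigenvalues ±3√(2ML²) and ±√(2ML²); in particular all fixed points are hyperbolic, (3M,0) is a saddle, (0, √(2ML²)) is an unstable node and (0, −√(2ML²)) is a stable node. -/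
/-- For the Schwarzschild null system `r' = ru, u' = rL² − 3L²M + (3/2)u²` with `L ≠ 0`:
the fixed points are `(3M, 0)` and `(0, ±√(2M)L)`; the Jacobian at `(3M,0)` has
eigenvalues `±√(3ML²)`, and at `(0, ±√(2ML²))` has eigenvalues `±√(2ML²)`, `±3√(2ML²)`;
all fixed points are hyperbolic, `(3M,0)` is a saddle, `(0, √(2ML²))` an unstable node
and `(0, −√(2ML²))` a stable node. -/
theorem schwarzschild_null_fixed_points
    (M L : ℝ) (hM : 0 < M) (hL : L ≠ 0) :
    -- fixed points
    (∀ r u : ℝ, (r * u = 0 ∧ r * L ^ 2 - 3 * L ^ 2 * M + (3 / 2) * u ^ 2 = 0) ↔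
      ((r, u) = (3 * M, 0) ∨ (r, u) = (0, Real.sqrt (2 * M) * |L|) ∨
        (r, u) = (0, -(Real.sqrt (2 * M) * |L|)))) ∧
    -- eigenvalues of the Jacobian !![u, r; L², 3u] at (3M, 0): saddle
    (∀ lam : ℝ,
      Matrix.det (!![(0 : ℝ), 3 * M; L ^ 2, 0] - lam • (1 : Matrix (Fin 2) (Fin 2) ℝ)) = 0
        ↔ lam = Real.sqrt (3 * M * L ^ 2) ∨ lam = -Real.sqrt (3 * M * L ^ 2)) ∧
    -- eigenvalues at (0, ±√(2ML²)): nodes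
    (∀ ε : ℝ, ε = 1 ∨ ε = -1 →
      ∀ lam : ℝ,
        (Matrix.det (!![ε * Real.sqrt (2 * M * L ^ 2), (0 : ℝ);
            L ^ 2, 3 * (ε * Real.sqrt (2 * M * L ^ 2))]
            - lam • (1 : Matrix (Fin 2) (Fin 2) ℝ)) = 0
          ↔ lam = ε * Real.sqrt (2 * M * L ^ 2) ∨ lam = 3 * (ε * Real.sqrt (2 * M * L ^ 2)))) ∧
    -- hyperbolicity and node character: the eigenvalues are nonzero with the stated signs
    0 < Real.sqrt (3 * M * L ^ 2) ∧ 0 < Real.sqrt (2 * M * L ^ 2) := by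
  have hL2 : (0:ℝ) < L ^ 2 := by positivity
  have h3 : (0:ℝ) < 3 * M * L ^ 2 := by positivity
  have h2 : (0:ℝ) < 2 * M * L ^ 2 := by positivity
  have hs3 : Real.sqrt (3 * M * L ^ 2) ^ 2 = 3 * M * L ^ 2 := Real.sq_sqrt h3.le
  have hs2 : Real.sqrt (2 * M * L ^ 2) ^ 2 = 2 * M * L ^ 2 := Real.sq_sqrt h2.le
  have hsq : Real.sqrt (2 * M) * |L| = Real.sqrt (2 * M * L ^ 2) := by
    rw [← Real.sqrt_sq_eq_abs, ← Real.sqrt_mul (by positivity)]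
  have hsq2 : (Real.sqrt (2 * M) * |L|) ^ 2 = 2 * M * L ^ 2 := by rw [hsq]; exact hs2
  refine ⟨?_, ?_, ?_, Real.sqrt_pos.2 h3, Real.sqrt_pos.2 h2⟩
  · intro r u
    constructor
    · rintro ⟨h1, h2'⟩
      rcases mul_eq_zero.1 h1 with hr | hu
      · subst hr
        have hu2 : u ^ 2 = 2 * M * L ^ 2 := by linarith
        have : (u - Real.sqrt (2 * M * L ^ 2)) * (u + Real.sqrt (2 * M * L ^ 2)) = 0 := by
          nlinarith [hs2]
        rcases mul_eq_zero.1 this with h | h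
        · right; left; rw [Prod.mk.injEq]; exact ⟨rfl, by rw [hsq]; linarith⟩
        · right; right; rw [Prod.mk.injEq]; exact ⟨rfl, by rw [hsq]; linarith⟩
      · subst hu
        left
        have : r = 3 * M := by
          have := mul_right_cancel₀ (ne_of_gt hL2) (show r * L ^ 2 = 3 * M * L ^ 2 by nlinarith)
          exact this
        simp [this]
    · rintro (h | h | h) <;>
        (simp only [Prod.mk.injEq] at h; obtain ⟨h1, h2'⟩ := h; subst h1; subst h2') <;>
        constructor <;> nlinarith [hsq2]
  · intro lam
    have hdet : Matrix.det (!![(0 : ℝ), 3 * M; L ^ 2, 0] - lam • (1 : Matrix (Fin 2) (Fin 2) ℝ))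
        = lam ^ 2 - 3 * M * L ^ 2 := by
      simp [Matrix.det_fin_two, Matrix.smul_apply, Matrix.one_apply]; ring
    rw [hdet]
    constructor
    · intro h
      have : (lam - Real.sqrt (3 * M * L ^ 2)) * (lam + Real.sqrt (3 * M * L ^ 2)) = 0 := by
        nlinarith [hs3]
      rcases mul_eq_zero.1 this with h' | h'
      · left; linarith
      · right; linarith
    · rintro (h | h) <;> subst h <;> nlinarith [hs3]
  · intro ε hε lam
    have hdet : Matrix.det (!![ε * Real.sqrt (2 * M * L ^ 2), (0 : ℝ);
          L ^ 2, 3 * (ε * Real.sqrt (2 * M * L ^ 2))]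
          - lam • (1 : Matrix (Fin 2) (Fin 2) ℝ))
        = (ε * Real.sqrt (2 * M * L ^ 2) - lam) * (3 * (ε * Real.sqrt (2 * M * L ^ 2)) - lam) := by
      simp [Matrix.det_fin_two, Matrix.smul_apply, Matrix.one_apply]
    rw [hdet, mul_eq_zero]
    constructor
    · rintro (h | h)
      · left; linarith
      · right; linarith
    · rintro (h | h)
      · left; linarith
      · right; linarith
end

section
/- For the Schwarzschild timelike system (μ = 1) r' = ru, u' = r(L² − Mr) − 3L²M + (3/2)u², fixed points with r > 0 exist if and only if L² ≥ 12M², in which case they are (r, u) = ((L² ± |L|√(L² − 12M²))/(2M), 0). For L² > 12M², the fixed point with r = r₊ is a center (the Jacobian there has purely imaginary nonzero eigenvalues) and the one with r = r₋ is a saddle (real eigenvalues of opposite sign). -/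
/-- For the Schwarzschild timelike system `r' = ru, u' = r(L² − Mr) − 3L²M + (3/2)u²`:
fixed points with `r > 0` exist iff `L² ≥ 12M²`, in which case they are
`(r, u) = ((L² ± |L|√(L² − 12M²))/(2M), 0)`. For `L² > 12M²`, the Jacobian at `r₊` has
purely imaginary nonzero eigenvalues (center) and at `r₋` real eigenvalues of opposite
sign (saddle). -/
theorem schwarzschild_timelike_fixed_points
    (M L : ℝ) (hM : 0 < M) :
    let rp : ℝ := (L ^ 2 + |L| * Real.sqrt (L ^ 2 - 12 * M ^ 2)) / (2 * M)
    let rm : ℝ := (L ^ 2 - |L| * Real.sqrt (L ^ 2 - 12 * M ^ 2)) / (2 * M)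
    -- existence of fixed points with r > 0
    ((∃ r u : ℝ, 0 < r ∧ r * u = 0 ∧
        r * (L ^ 2 - M * r) - 3 * L ^ 2 * M + (3 / 2) * u ^ 2 = 0) ↔ 12 * M ^ 2 ≤ L ^ 2) ∧
    -- characterization of the fixed points
    (12 * M ^ 2 ≤ L ^ 2 → ∀ r u : ℝ, 0 < r →
      ((r * u = 0 ∧ r * (L ^ 2 - M * r) - 3 * L ^ 2 * M + (3 / 2) * u ^ 2 = 0) ↔
        (u = 0 ∧ (r = rp ∨ r = rm)))) ∧
    -- center at r₊ : purely imaginary nonzero eigenvalues of !![0, r; L² − 2Mr, 0]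
    (12 * M ^ 2 < L ^ 2 →
      (∀ lam : ℂ,
        (Matrix.det (!![(0 : ℂ), (rp : ℝ); ((L ^ 2 - 2 * M * rp : ℝ) : ℂ), 0]
            - lam • (1 : Matrix (Fin 2) (Fin 2) ℂ)) = 0
          ↔ lam = Complex.I * (Real.sqrt (rp * (2 * M * rp - L ^ 2)) : ℝ) ∨
            lam = -(Complex.I * (Real.sqrt (rp * (2 * M * rp - L ^ 2)) : ℝ)))) ∧
      0 < rp * (2 * M * rp - L ^ 2) ∧
      -- saddle at r₋ : real eigenvalues of opposite sign
      (∀ lam : ℝ,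
        (Matrix.det (!![(0 : ℝ), rm; L ^ 2 - 2 * M * rm, 0]
            - lam • (1 : Matrix (Fin 2) (Fin 2) ℝ)) = 0
          ↔ lam = Real.sqrt (rm * (L ^ 2 - 2 * M * rm)) ∨
            lam = -Real.sqrt (rm * (L ^ 2 - 2 * M * rm)))) ∧
      0 < rm * (L ^ 2 - 2 * M * rm)) := by
  intro rp rm
  have hrp : rp = (L ^ 2 + |L| * Real.sqrt (L ^ 2 - 12 * M ^ 2)) / (2 * M) := rfl
  have hrm : rm = (L ^ 2 - |L| * Real.sqrt (L ^ 2 - 12 * M ^ 2)) / (2 * M) := rfl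
  set s := Real.sqrt (L ^ 2 - 12 * M ^ 2) with hsdef
  have hM2 : (2 * M) ≠ 0 := by positivity
  have hsnn : 0 ≤ s := Real.sqrt_nonneg _
  -- key facts under 12M² ≤ L²
  have key : 12 * M ^ 2 ≤ L ^ 2 →
      M * (rp + rm) = L ^ 2 ∧ rp * rm = 3 * L ^ 2 ∧ 0 < rp ∧ 0 < rm ∧
      2 * M * rp = L ^ 2 + |L| * s ∧ 2 * M * rm = L ^ 2 - |L| * s := by
    intro h
    have hs2 : s ^ 2 = L ^ 2 - 12 * M ^ 2 := Real.sq_sqrt (by linarith)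
    have hL2 : |L| ^ 2 = L ^ 2 := sq_abs L
    have hL0 : 0 < L ^ 2 := by nlinarith
    have e1 : 2 * M * rp = L ^ 2 + |L| * s := by rw [hrp]; field_simp
    have e2 : 2 * M * rm = L ^ 2 - |L| * s := by rw [hrm]; field_simp
    have hprod4 : (2 * M * rp) * (2 * M * rm) = 12 * L ^ 2 * M ^ 2 := by
      rw [e1, e2]; linear_combination (-(s ^ 2)) * hL2 + (-(L ^ 2)) * hs2
    have hprod : rp * rm = 3 * L ^ 2 := by
      have h4 : (4 * M ^ 2) ≠ 0 := by positivity
      apply mul_left_cancel₀ h4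
      linear_combination hprod4
    have hsum : M * (rp + rm) = L ^ 2 := by linarith [e1, e2]
    have h3 : (|L| * s) * (|L| * s) = L ^ 2 * (L ^ 2 - 12 * M ^ 2) := by
      linear_combination s ^ 2 * hL2 + L ^ 2 * hs2
    have hls : |L| * s < L ^ 2 := by
      by_contra hge
      push_neg at hge
      have h2 : L ^ 2 * L ^ 2 ≤ (|L| * s) * (|L| * s) :=
        mul_le_mul hge hge (le_of_lt hL0) (mul_nonneg (abs_nonneg L) hsnn)
      rw [h3] at h2
      nlinarith [mul_pos hL0 (pow_pos hM 2)]
    have hrm0 : 0 < rm := by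
      rw [hrm]; apply div_pos (by linarith) (by linarith)
    have hrp0 : 0 < rp := by
      rw [hrp]
      apply div_pos (by nlinarith [mul_nonneg (abs_nonneg L) hsnn]) (by linarith)
    exact ⟨hsum, hprod, hrp0, hrm0, e1, e2⟩
  -- characterization
  have char : 12 * M ^ 2 ≤ L ^ 2 → ∀ r u : ℝ, 0 < r →
      ((r * u = 0 ∧ r * (L ^ 2 - M * r) - 3 * L ^ 2 * M + (3 / 2) * u ^ 2 = 0) ↔
        (u = 0 ∧ (r = rp ∨ r = rm))) := by
    intro h r u hr
    obtain ⟨hsum, hprod, hrp0, hrm0, e1, e2⟩ := key h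
    constructor
    · rintro ⟨hru, heq⟩
      have hu : u = 0 := by
        rcases mul_eq_zero.mp hru with h0 | h0
        · exact absurd h0 (ne_of_gt hr)
        · exact h0
      subst hu
      refine ⟨rfl, ?_⟩
      have hfac : (r - rp) * (r - rm) = 0 := by
        have hMne : M ≠ 0 := ne_of_gt hM
        apply mul_left_cancel₀ hMne
        linear_combination (-1) * heq + (-r) * hsum + M * hprod
      rcases mul_eq_zero.mp hfac with h0 | h0
      · exact Or.inl (by linarith [sub_eq_zero.mp h0])
      · exact Or.inr (by linarith [sub_eq_zero.mp h0])
    · rintro ⟨hu, hr'⟩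
      subst hu
      refine ⟨by ring, ?_⟩
      rcases hr' with h0 | h0 <;> subst h0
      · linear_combination (-rp) * hsum + M * hprod
      · linear_combination (-rm) * hsum + M * hprod
  refine ⟨?_, char, ?_⟩
  · -- existence iff
    constructor
    · rintro ⟨r, u, hr, hru, heq⟩
      by_contra hcon
      push_neg at hcon
      have hu : u = 0 := by
        rcases mul_eq_zero.mp hru with h0 | h0
        · exact absurd h0 (ne_of_gt hr)
        · exact h0
      subst hu
      have keyeq : (2 * M * r - L ^ 2) ^ 2 + L ^ 2 * (12 * M ^ 2 - L ^ 2) = 0 := by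
        linear_combination (-(4 * M)) * heq
      rcases eq_or_lt_of_le (sq_nonneg L) with hL | hL
      · nlinarith [mul_pos hM hr]
      · nlinarith [sq_nonneg (2 * M * r - L ^ 2), mul_pos hL (by linarith : (0:ℝ) < 12 * M ^ 2 - L ^ 2)]
    · intro h
      obtain ⟨hsum, hprod, hrp0, hrm0, e1, e2⟩ := key h
      exact ⟨rp, 0, hrp0, by ring, ((char h rp 0 hrp0).mpr ⟨rfl, Or.inl rfl⟩).2⟩
  · -- eigenvalues
    intro hlt
    obtain ⟨hsum, hprod, hrp0, hrm0, e1, e2⟩ := key (le_of_lt hlt)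
    have hs0 : 0 < s := Real.sqrt_pos.mpr (by linarith)
    have hL0 : 0 < L ^ 2 := by nlinarith
    have habs : 0 < |L| := abs_pos.mpr (by intro h0; rw [h0] at hL0; simp at hL0)
    have hlsp : 0 < |L| * s := mul_pos habs hs0
    have hposp : 0 < rp * (2 * M * rp - L ^ 2) := mul_pos hrp0 (by linarith)
    have hposm : 0 < rm * (L ^ 2 - 2 * M * rm) := mul_pos hrm0 (by linarith)
    set w := Real.sqrt (rp * (2 * M * rp - L ^ 2)) with hwdef
    set c := Real.sqrt (rm * (L ^ 2 - 2 * M * rm)) with hcdef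
    have hw2 : w ^ 2 = rp * (2 * M * rp - L ^ 2) := Real.sq_sqrt hposp.le
    have hc2 : c ^ 2 = rm * (L ^ 2 - 2 * M * rm) := Real.sq_sqrt hposm.le
    refine ⟨?_, hposp, ?_, hposm⟩
    · intro lam
      have hdet : Matrix.det (!![(0 : ℂ), (rp : ℝ); ((L ^ 2 - 2 * M * rp : ℝ) : ℂ), 0]
            - lam • (1 : Matrix (Fin 2) (Fin 2) ℂ))
          = lam ^ 2 - (rp : ℂ) * ((L ^ 2 - 2 * M * rp : ℝ) : ℂ) := by
        simp [Matrix.det_fin_two, Matrix.smul_apply, Matrix.one_apply]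
        ring
      rw [hdet]
      have h' : rp * (L ^ 2 - 2 * M * rp) = -(w ^ 2) := by rw [hw2]; ring
      have hcast : (rp : ℂ) * ((L ^ 2 - 2 * M * rp : ℝ) : ℂ) = -((w : ℂ) ^ 2) := by
        calc (rp : ℂ) * ((L ^ 2 - 2 * M * rp : ℝ) : ℂ)
            = ((rp * (L ^ 2 - 2 * M * rp) : ℝ) : ℂ) := by push_cast; ring
          _ = ((-(w ^ 2) : ℝ) : ℂ) := by rw [h']
          _ = -((w : ℂ) ^ 2) := by push_cast; ring
      rw [hcast]
      constructor
      · intro h0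
        have hfac : (lam - Complex.I * (w : ℂ)) * (lam + Complex.I * (w : ℂ)) = 0 := by
          have hI : Complex.I ^ 2 = -1 := Complex.I_sq
          linear_combination h0 - (w : ℂ) ^ 2 * hI
        rcases mul_eq_zero.mp hfac with h1 | h1
        · exact Or.inl (by linear_combination h1)
        · exact Or.inr (by linear_combination h1)
      · rintro (h1 | h1) <;> subst h1 <;>
          · have hI : Complex.I ^ 2 = -1 := Complex.I_sq
            linear_combination (w : ℂ) ^ 2 * hI
    · intro lam
      have hdet : Matrix.det (!![(0 : ℝ), rm; L ^ 2 - 2 * M * rm, 0]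
            - lam • (1 : Matrix (Fin 2) (Fin 2) ℝ))
          = lam ^ 2 - rm * (L ^ 2 - 2 * M * rm) := by
        simp [Matrix.det_fin_two, Matrix.smul_apply, Matrix.one_apply]
        ring
      rw [hdet, ← hc2]
      constructor
      · intro h0
        have hfac : (lam - c) * (lam + c) = 0 := by linear_combination h0
        rcases mul_eq_zero.mp hfac with h1 | h1
        · exact Or.inl (by linarith [sub_eq_zero.mp h1])
        · exact Or.inr (by linarith [add_eq_zero_iff_eq_neg.mp h1])
      · rintro (h1 | h1) <;> subst h1 <;> ring
end

section
/- For the Reissner–Nordström potential V(r) = −M(L²/r³ + μ/r) + Q²(L²/(2r⁴) + μ/(2r²)) with β = −2, the reduced McGehee system is r' = ru, θ' = Lr, u' = r(r(L² − μMr + μQ²) − 3L²M) + 2(L²Q² + u²), and the quantity L²(r(r−2M)+Q²) + μr²(Q² − 2Mr) + u² − 2r⁴ε is conserved (constant) along solutions for r > 0. -/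
/-- For the Reissner–Nordström potential
`V(r) = −M(L²/r³ + μ/r) + Q²(L²/(2r⁴) + μ/(2r²))` with `β = −2`, the reduced McGehee
system is `r' = ru, θ' = Lr, u' = r(r(L² − μMr + μQ²) − 3L²M) + 2(L²Q² + u²)`, and
`L²(r(r−2M)+Q²) + μr²(Q² − 2Mr) + u² − 2r⁴ε` vanishes identically along solutions for a
suitable energy constant `ε`. -/
theorem reissner_nordstrom_reduced_system
    (M Q L μ : ℝ) (hM : 0 < M) (hμ : μ = -1 ∨ μ = 0 ∨ μ = 1)
    (Λ : ℝ → ℝ)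
    (hΛ : ∀ ρ : ℝ, 0 < ρ →
      Λ ρ = -3 * M * L ^ 2 / ρ ^ 5 - μ * M / ρ ^ 3
        + 2 * Q ^ 2 * L ^ 2 / ρ ^ 6 + μ * Q ^ 2 / ρ ^ 4) :
    -- the reduced McGehee right-hand side with β = −2 takes the stated form
    (∀ r u : ℝ, 0 < r →
      r ^ (-2 * ((-2 : ℝ) + 1)) * (L ^ 2 + r ^ 4 * Λ r) - (-2 : ℝ) * u ^ 2
        = r * (r * (L ^ 2 - μ * M * r + μ * Q ^ 2) - 3 * L ^ 2 * M)
          + 2 * (L ^ 2 * Q ^ 2 + u ^ 2) ∧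
      L * r ^ (-((-2 : ℝ) + 1)) = L * r) ∧
    -- conservation of the energy combination
    (∀ r u θ : ℝ → ℝ, (∀ s, 0 < r s) →
      (∀ s, HasDerivAt r (r s * u s) s ∧ HasDerivAt θ (L * r s) s ∧
        HasDerivAt u (r s * (r s * (L ^ 2 - μ * M * r s + μ * Q ^ 2) - 3 * L ^ 2 * M)
          + 2 * (L ^ 2 * Q ^ 2 + (u s) ^ 2)) s) →
      ∃ ε : ℝ, ∀ s : ℝ,
        L ^ 2 * (r s * (r s - 2 * M) + Q ^ 2) + μ * (r s) ^ 2 * (Q ^ 2 - 2 * M * r s)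
          + (u s) ^ 2 - 2 * (r s) ^ 4 * ε = 0) := by
  constructor
  · intro r u hr
    constructor
    · have h1 : (-2 * ((-2 : ℝ) + 1)) = (2 : ℕ) := by norm_num
      rw [h1, Real.rpow_natCast, hΛ r hr]
      have h5 : r ^ 5 ≠ 0 := by positivity
      have h3 : r ^ 3 ≠ 0 := by positivity
      have h6 : r ^ 6 ≠ 0 := by positivity
      have h4 : r ^ 4 ≠ 0 := by positivity
      field_simp
      ring
    · have h1 : (-((-2 : ℝ) + 1)) = (1 : ℕ) := by norm_num
      rw [h1, Real.rpow_natCast, pow_one]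
  · intro r u θ hr hsys
    -- the function G/r⁴ has zero derivative, hence is constant
    set G : ℝ → ℝ := fun s =>
      L ^ 2 * (r s * (r s - 2 * M) + Q ^ 2) + μ * (r s) ^ 2 * (Q ^ 2 - 2 * M * r s)
        + (u s) ^ 2 with hG
    have key : ∀ s, HasDerivAt (fun s => G s / (r s) ^ 4) 0 s := by
      intro s
      have hr' := (hsys s).1
      have hu' := (hsys s).2.2
      have hGd : HasDerivAt G
          (L ^ 2 * ((r s * u s) * (r s - 2 * M) + r s * (r s * u s))
            + (μ * (2 * r s * (r s * u s)) * (Q ^ 2 - 2 * M * r s)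
              + μ * (r s) ^ 2 * (-(2 * M * (r s * u s))))
            + 2 * u s * (r s * (r s * (L ^ 2 - μ * M * r s + μ * Q ^ 2) - 3 * L ^ 2 * M)
              + 2 * (L ^ 2 * Q ^ 2 + (u s) ^ 2))) s := by
        have h1 : HasDerivAt (fun s => L ^ 2 * (r s * (r s - 2 * M) + Q ^ 2))
            (L ^ 2 * ((r s * u s) * (r s - 2 * M) + r s * (r s * u s))) s := by
          exact ((hr'.mul (hr'.sub_const (2 * M))).add_const (Q ^ 2)).const_mul _
        have h2 : HasDerivAt (fun s => μ * (r s) ^ 2 * (Q ^ 2 - 2 * M * r s))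
            (μ * (2 * r s * (r s * u s)) * (Q ^ 2 - 2 * M * r s)
              + μ * (r s) ^ 2 * (-(2 * M * (r s * u s)))) s := by
          have ha : HasDerivAt (fun s => μ * (r s) ^ 2) (μ * (2 * r s * (r s * u s))) s := by
            have := (hr'.pow 2).const_mul μ
            simpa [mul_comm, mul_assoc, pow_one] using this
          have hb : HasDerivAt (fun s => Q ^ 2 - 2 * M * r s) (-(2 * M * (r s * u s))) s := by
            have := (hr'.const_mul (2 * M)).const_sub (Q ^ 2)
            simpa using this
          exact ha.mul hb
        have h3 : HasDerivAt (fun s => (u s) ^ 2)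
            (2 * u s * (r s * (r s * (L ^ 2 - μ * M * r s + μ * Q ^ 2) - 3 * L ^ 2 * M)
              + 2 * (L ^ 2 * Q ^ 2 + (u s) ^ 2))) s := by
          refine (hu'.pow 2).congr_deriv ?_
          push_cast
          ring
        exact (h1.add h2).add h3
      have hr4 : HasDerivAt (fun s => (r s) ^ 4) (4 * (r s) ^ 3 * (r s * u s)) s := by
        have := hr'.pow 4
        norm_num at this
        exact this
      have hne : (r s) ^ 4 ≠ 0 := by have := hr s; positivity
      have := hGd.div hr4 hne
      refine this.congr_deriv ?_
      have hrs := (hr s).ne'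
      rw [div_eq_zero_iff]
      left
      simp only [hG]
      ring
    have hconst : ∀ s, G s / (r s) ^ 4 = G 0 / (r 0) ^ 4 := by
      intro s
      have hdiff : Differentiable ℝ (fun s => G s / (r s) ^ 4) :=
        fun s => (key s).differentiableAt
      have hderiv : ∀ s, deriv (fun s => G s / (r s) ^ 4) s = 0 :=
        fun s => (key s).deriv
      have := is_const_of_deriv_eq_zero hdiff hderiv s 0
      simpa using this
    refine ⟨G 0 / (r 0) ^ 4 / 2, fun s => ?_⟩
    have h := hconst s
    have hne : (r s) ^ 4 ≠ 0 := by have := hr s; positivity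
    have : G s = (r s) ^ 4 * (G 0 / (r 0) ^ 4) := by
      rw [← h]
      field_simp
      exact (mul_div_cancel_right₀ _ (hr s).ne').symm
    simp only [hG] at this
    nlinarith [this]
end
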